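/- Suppose A, D, B and A', D', B' give two decompositions of the same U ∈ SU(d), with A, A', B, B' real orthogonal and D, D' diagonal unitary. Then the multiset of squared diagonal entries of D equals that of D': there is a permutation matrix P with D'² = P D² Pᵀ. -/

import Mathlib

open Matrix

section Aux

variable {α : Type*}

/-- From equality of multisets of values, extract a permutation. -/
lemma exists_perm_of_map_univ_eq : ∀ {n : ℕ} {f g : Fin n → α},
    (Finset.univ.val.map g = Finset.univ.val.map f) →
    ∃ σ : Equiv.Perm (Fin n), ∀ k, g k = f (σ k) := by
  intro n
  induction n with
  | zero => intro f g _; exact ⟨Equiv.refl _, fun k => k.elim0⟩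
  | succ n ih =>
    intro f g h
    have hg0 : g 0 ∈ Finset.univ.val.map f := by
      rw [← h]; exact Multiset.mem_map_of_mem _ (Finset.mem_univ (0 : Fin (n+1)))
    obtain ⟨j, -, hj⟩ := Multiset.mem_map.1 hg0
    have hG : (Finset.univ.val.map g : Multiset α)
        = g 0 ::ₘ Multiset.map (fun i => g (Fin.succ i)) Finset.univ.val := by
      rw [Fin.univ_succ, Finset.cons_val, Multiset.map_cons, Finset.map_val,
        Multiset.map_map]
      rfl
    have hF : (Finset.univ.val.map f : Multiset α)
        = f j ::ₘ Multiset.map (fun i => f (j.succAbove i)) Finset.univ.val := by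
      rw [Fin.univ_succAbove n j, Finset.cons_val, Multiset.map_cons, Finset.map_val,
        Multiset.map_map]
      rfl
    rw [hG, hF, ← hj] at h
    have h' : Multiset.map (fun i => g (Fin.succ i)) Finset.univ.val
        = Multiset.map (fun i => f (j.succAbove i)) Finset.univ.val :=
      (Multiset.cons_inj_right _).1 h
    obtain ⟨τ, hτ⟩ := ih h'
    refine ⟨(finSuccEquiv n).trans ((Equiv.optionCongr τ).trans (finSuccEquiv' j).symm), ?_⟩
    intro k
    refine Fin.cases ?_ (fun i => ?_) k
    · simpa [finSuccEquiv'] using hj.symm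
    · simpa [finSuccEquiv'_succAbove] using hτ i

variable {R : Type*} [CommRing R]

/-- Characteristic polynomial is invariant under conjugation. -/
lemma charpoly_conj_aux {n : ℕ} (M Q Qi : Matrix (Fin n) (Fin n) R)
    (h1 : Q * Qi = 1) : (Q * M * Qi).charpoly = M.charpoly := by
  have hc : ∀ N : Matrix (Fin n) (Fin n) R,
      charmatrix N = Matrix.scalar (Fin n) (Polynomial.X : Polynomial R) - N.map Polynomial.C :=
    fun N => rfl
  have hQc : Q.map Polynomial.C * Qi.map Polynomial.C = 1 := by
    rw [← Matrix.map_mul, h1]; simp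
  have key : Q.map Polynomial.C * charmatrix M * Qi.map Polynomial.C
      = charmatrix (Q * M * Qi) := by
    rw [hc, hc, Matrix.mul_sub, Matrix.sub_mul]
    congr 1
    · calc Q.map Polynomial.C * Matrix.scalar (Fin n) (Polynomial.X : Polynomial R)
              * Qi.map Polynomial.C
          = Matrix.scalar (Fin n) (Polynomial.X : Polynomial R) * Q.map Polynomial.C
              * Qi.map Polynomial.C := by
            rw [← (Matrix.scalar_commute (Polynomial.X : Polynomial R)
              (fun r' => Commute.all _ _) (Q.map Polynomial.C)).eq]
        _ = Matrix.scalar (Fin n) (Polynomial.X : Polynomial R)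
              * (Q.map Polynomial.C * Qi.map Polynomial.C) := Matrix.mul_assoc _ _ _
        _ = Matrix.scalar (Fin n) (Polynomial.X : Polynomial R) := by
            rw [hQc, Matrix.mul_one]
    · rw [← Matrix.map_mul, ← Matrix.map_mul]
  have hdet : (Q.map Polynomial.C).det * (Qi.map Polynomial.C).det = 1 := by
    rw [← Matrix.det_mul, hQc, Matrix.det_one]
  rw [Matrix.charpoly, ← key, Matrix.det_mul, Matrix.det_mul, Matrix.charpoly,
    mul_right_comm, hdet, one_mul]

lemma charpoly_diagonal_aux {n : ℕ} (v : Fin n → R) :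
    (Matrix.diagonal v).charpoly
      = (Finset.univ.val.map fun i => Polynomial.X - Polynomial.C (v i)).prod := by
  have : charmatrix (Matrix.diagonal v)
      = Matrix.diagonal (fun i => Polynomial.X - Polynomial.C (v i)) := by
    ext i k
    by_cases h : i = k
    · subst h; simp [charmatrix_apply_eq]
    · simp [charmatrix_apply_ne _ _ _ h, Matrix.diagonal_apply_ne _ h]
  rw [Matrix.charpoly, this, Matrix.det_diagonal]
  rfl

end Aux

/-- If U = A D Bᵀ = A' D' B'ᵀ with A, B, A', B' real orthogonal and D, D' diagonal
unitary, then the multisets of squared diagonal entries of D and D' coincide: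
D'² equals D² up to a permutation of the diagonal. -/
theorem kak_middle_factor_unique_up_to_permutation {d : ℕ}
    (U D D' : Matrix (Fin d) (Fin d) ℂ) (A B A' B' : Matrix (Fin d) (Fin d) ℝ)
    (hA : A ∈ Matrix.orthogonalGroup (Fin d) ℝ)
    (hB : B ∈ Matrix.orthogonalGroup (Fin d) ℝ)
    (hA' : A' ∈ Matrix.orthogonalGroup (Fin d) ℝ)
    (hB' : B' ∈ Matrix.orthogonalGroup (Fin d) ℝ)
    (hD : D.IsDiag) (hDu : D ∈ Matrix.unitaryGroup (Fin d) ℂ)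
    (hD' : D'.IsDiag) (hD'u : D' ∈ Matrix.unitaryGroup (Fin d) ℂ)
    (hU : U = (A.map Complex.ofReal) * D * (B.map Complex.ofReal)ᵀ)
    (hU' : U = (A'.map Complex.ofReal) * D' * (B'.map Complex.ofReal)ᵀ) :
    ∃ σ : Equiv.Perm (Fin d), ∀ k, (D' * D') k k = (D * D) (σ k) (σ k) := by
  classical
  -- complexified matrices
  set ρ : ℝ →+* ℂ := Complex.ofRealHom with hρ
  have hmapeq : ∀ M : Matrix (Fin d) (Fin d) ℝ, M.map Complex.ofReal = M.map ρ := fun _ => rfl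
  -- orthogonality facts over ℂ
  have horth : ∀ M : Matrix (Fin d) (Fin d) ℝ, M ∈ Matrix.orthogonalGroup (Fin d) ℝ →
      (M.map ρ)ᵀ * (M.map ρ) = 1 ∧ (M.map ρ) * (M.map ρ)ᵀ = 1 := by
    intro M hM
    rw [Matrix.mem_orthogonalGroup_iff] at hM
    have hM' : Mᵀ * M = 1 := by
      have := mul_eq_one_comm.mp hM
      simpa using this
    have hM'' : M * Mᵀ = 1 := by simpa using hM
    constructor
    · rw [← Matrix.transpose_map, ← Matrix.map_mul, hM']; simp
    · rw [← Matrix.transpose_map, ← Matrix.map_mul, hM'']; simp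
  -- D and D' are diagonal
  have hDdiag : D = Matrix.diagonal (fun i => D i i) := by
    ext i k
    by_cases h : i = k
    · subst h; simp
    · rw [hD h, Matrix.diagonal_apply_ne _ h]
  have hD'diag : D' = Matrix.diagonal (fun i => D' i i) := by
    ext i k
    by_cases h : i = k
    · subst h; simp
    · rw [hD' h, Matrix.diagonal_apply_ne _ h]
  have hDT : Dᵀ = D := by
    rw [hDdiag]; exact Matrix.diagonal_transpose _
  have hD'T : D'ᵀ = D' := by
    rw [hD'diag]; exact Matrix.diagonal_transpose _
  -- compute Uᵀ * U two ways
  have hkey : (B.map ρ) * (D * D) * (B.map ρ)ᵀ = (B'.map ρ) * (D' * D') * (B'.map ρ)ᵀ := by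
    have e1 : Uᵀ * U = (B.map ρ) * (D * D) * (B.map ρ)ᵀ := by
      rw [hU, hmapeq, hmapeq]
      simp only [Matrix.transpose_mul, Matrix.transpose_transpose, hDT, Matrix.mul_assoc]
      congr 1
      congr 1
      rw [← Matrix.mul_assoc, (horth A hA).1, Matrix.one_mul]
    have e2 : Uᵀ * U = (B'.map ρ) * (D' * D') * (B'.map ρ)ᵀ := by
      rw [hU', hmapeq, hmapeq]
      simp only [Matrix.transpose_mul, Matrix.transpose_transpose, hD'T, Matrix.mul_assoc]
      congr 1
      congr 1
      rw [← Matrix.mul_assoc, (horth A' hA').1, Matrix.one_mul]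
    rw [← e1, e2]
  -- conjugation relation
  set Q : Matrix (Fin d) (Fin d) ℂ := (B'.map ρ)ᵀ * (B.map ρ) with hQ
  set Qi : Matrix (Fin d) (Fin d) ℂ := (B.map ρ)ᵀ * (B'.map ρ) with hQi
  have hQQi : Q * Qi = 1 := by
    rw [hQ, hQi, Matrix.mul_assoc, ← Matrix.mul_assoc (B.map ρ), (horth B hB).2,
      Matrix.one_mul, (horth B' hB').1]
  have hconj : D' * D' = Q * (D * D) * Qi := by
    rw [hQ, hQi]
    calc D' * D'
        = ((B'.map ρ)ᵀ * (B'.map ρ)) * (D' * D') * ((B'.map ρ)ᵀ * (B'.map ρ)) := by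
          rw [(horth B' hB').1]; simp
      _ = (B'.map ρ)ᵀ * ((B'.map ρ) * (D' * D') * (B'.map ρ)ᵀ) * (B'.map ρ) := by
          simp only [Matrix.mul_assoc]
      _ = (B'.map ρ)ᵀ * ((B.map ρ) * (D * D) * (B.map ρ)ᵀ) * (B'.map ρ) := by rw [hkey]
      _ = (B'.map ρ)ᵀ * (B.map ρ) * (D * D) * ((B.map ρ)ᵀ * (B'.map ρ)) := by
          simp only [Matrix.mul_assoc]
  -- charpoly equality
  have hDD : D * D = Matrix.diagonal (fun i => D i i * D i i) := by
    conv_lhs => rw [hDdiag]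
    rw [Matrix.diagonal_mul_diagonal]
  have hD'D' : D' * D' = Matrix.diagonal (fun i => D' i i * D' i i) := by
    conv_lhs => rw [hD'diag]
    rw [Matrix.diagonal_mul_diagonal]
  have hcp : (Matrix.diagonal (fun i => D' i i * D' i i)).charpoly
      = (Matrix.diagonal (fun i => D i i * D i i)).charpoly := by
    rw [← hD'D', ← hDD, hconj]
    exact charpoly_conj_aux _ _ _ hQQi
  rw [charpoly_diagonal_aux, charpoly_diagonal_aux] at hcp
  -- pass to roots
  have hroots : (Finset.univ.val.map fun i => D' i i * D' i i)
      = (Finset.univ.val.map fun i => D i i * D i i) := by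
    have h1 := Polynomial.roots_multiset_prod_X_sub_C
      (Finset.univ.val.map fun i => D' i i * D' i i)
    have h2 := Polynomial.roots_multiset_prod_X_sub_C
      (Finset.univ.val.map fun i => D i i * D i i)
    rw [Multiset.map_map] at h1 h2
    rw [← h1, ← h2]
    congr 1
  obtain ⟨σ, hσ⟩ := exists_perm_of_map_univ_eq hroots
  refine ⟨σ, fun k => ?_⟩
  rw [hDD, hD'D', Matrix.diagonal_apply_eq, Matrix.diagonal_apply_eq]
  exact hσ k
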